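/- Let A be an n×n binary (0/1) matrix and h ∈ [0,1]ⁿ. Then there exists a binary vector h' ∈ {0,1}ⁿ such that ∑_{i≠j} |A_{ij} − h'_i h'_j| ≤ ∑_{i≠j} |A_{ij} − h_i h_j|. -/

import Mathlib

private lemma key_aff (a c t : ℝ) (ha : a = 0 ∨ a = 1) (hc0 : 0 ≤ c) (hc1 : c ≤ 1)
    (ht0 : 0 ≤ t) (ht1 : t ≤ 1) :
    |a - t * c| = (1 - t) * |a| + t * |a - c| := by
  rcases ha with rfl | rfl
  · rw [zero_sub, abs_neg, abs_of_nonneg (by positivity), abs_zero, zero_sub, abs_neg,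
      abs_of_nonneg hc0]
    ring
  · rw [abs_of_nonneg (by nlinarith), abs_one, abs_of_nonneg (by linarith)]
    ring

private lemma aff_sum (n : ℕ) (A : Matrix (Fin n) (Fin n) ℝ)
    (hA : ∀ i j, A i j = 0 ∨ A i j = 1) (x : Fin n → ℝ)
    (hx : ∀ i, 0 ≤ x i ∧ x i ≤ 1) (k : Fin n) (t : ℝ) (ht0 : 0 ≤ t) (ht1 : t ≤ 1) :
    ∑ p ∈ Finset.univ.offDiag,
        |A p.1 p.2 - Function.update x k t p.1 * Function.update x k t p.2| =
      (1 - t) * ∑ p ∈ Finset.univ.offDiag,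
        |A p.1 p.2 - Function.update x k 0 p.1 * Function.update x k 0 p.2| +
      t * ∑ p ∈ Finset.univ.offDiag,
        |A p.1 p.2 - Function.update x k 1 p.1 * Function.update x k 1 p.2| := by
  rw [Finset.mul_sum, Finset.mul_sum, ← Finset.sum_add_distrib]
  apply Finset.sum_congr rfl
  intro p hp
  have hne : p.1 ≠ p.2 := (Finset.mem_offDiag.mp hp).2.2
  by_cases h1 : p.1 = k <;> by_cases h2 : p.2 = k
  · exact absurd (h1.trans h2.symm) hne
  · simp only [Function.update_apply, h1, h2, if_true, if_false, if_pos]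
    simp only [zero_mul, one_mul, sub_zero]
    exact key_aff _ _ _ (h1 ▸ hA p.1 p.2) (hx p.2).1 (hx p.2).2 ht0 ht1
  · simp only [Function.update_apply, h1, h2, if_true, if_false, if_pos]
    simp only [mul_zero, mul_one, sub_zero, mul_comm (x p.1) t]
    exact key_aff _ _ _ (h2 ▸ hA p.1 p.2) (hx p.1).1 (hx p.1).2 ht0 ht1
  · simp only [Function.update_apply, h1, h2, if_false]
    ring

theorem stmt1 (n : ℕ) (A : Matrix (Fin n) (Fin n) ℝ)
    (hA : ∀ i j, A i j = 0 ∨ A i j = 1) (h : Fin n → ℝ)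
    (hh : ∀ i, 0 ≤ h i ∧ h i ≤ 1) :
    ∃ h' : Fin n → ℝ, (∀ i, h' i = 0 ∨ h' i = 1) ∧
      ∑ p ∈ Finset.univ.offDiag, |A p.1 p.2 - h' p.1 * h' p.2| ≤
        ∑ p ∈ Finset.univ.offDiag, |A p.1 p.2 - h p.1 * h p.2| := by
  suffices H : ∀ S : Finset (Fin n), ∃ h' : Fin n → ℝ,
      (∀ i, 0 ≤ h' i ∧ h' i ≤ 1) ∧ (∀ i ∈ S, h' i = 0 ∨ h' i = 1) ∧
      ∑ p ∈ Finset.univ.offDiag, |A p.1 p.2 - h' p.1 * h' p.2| ≤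
        ∑ p ∈ Finset.univ.offDiag, |A p.1 p.2 - h p.1 * h p.2| by
    obtain ⟨h', _, h01, hle⟩ := H Finset.univ
    exact ⟨h', fun i => h01 i (Finset.mem_univ i), hle⟩
  intro S
  induction S using Finset.induction_on with
  | empty => exact ⟨h, hh, by simp, le_refl _⟩
  | @insert k S hk ih =>
    obtain ⟨g, hg, hgS, hgle⟩ := ih
    set F : (Fin n → ℝ) → ℝ := fun x =>
      ∑ p ∈ Finset.univ.offDiag, |A p.1 p.2 - x p.1 * x p.2| with hF
    have haff : F g = (1 - g k) * F (Function.update g k 0) + g k * F (Function.update g k 1) := by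
      have := aff_sum n A hA g hg k (g k) (hg k).1 (hg k).2
      rwa [Function.update_eq_self] at this
    have hbnd : ∀ (v : ℝ), 0 ≤ v → v ≤ 1 → ∀ i,
        0 ≤ Function.update g k v i ∧ Function.update g k v i ≤ 1 := by
      intro v hv0 hv1 i
      by_cases hi : i = k <;> simp [Function.update_apply, hi, hv0, hv1, hg i]
    have hmem : ∀ (v : ℝ), (v = 0 ∨ v = 1) → ∀ i ∈ insert k S,
        Function.update g k v i = 0 ∨ Function.update g k v i = 1 := by
      intro v hv i hi
      by_cases hik : i = k
      · simpa [Function.update_apply, hik] using hv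
      · rw [Function.update_apply, if_neg hik]
        exact hgS i ((Finset.mem_insert.mp hi).resolve_left hik)
    by_cases hcmp : F (Function.update g k 0) ≤ F (Function.update g k 1)
    · refine ⟨Function.update g k 0, hbnd 0 le_rfl zero_le_one, hmem 0 (Or.inl rfl), ?_⟩
      have h1 := (hg k).1; have h2 := (hg k).2
      calc F (Function.update g k 0) ≤ F g := by rw [haff]; nlinarith
        _ ≤ _ := hgle
    · refine ⟨Function.update g k 1, hbnd 1 zero_le_one le_rfl, hmem 1 (Or.inr rfl), ?_⟩
      push_neg at hcmp
      have h1 := (hg k).1; have h2 := (hg k).2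
      calc F (Function.update g k 1) ≤ F g := by rw [haff]; nlinarith
        _ ≤ _ := hgle
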